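/- Exchange argument: let T be a binary tree of minimal expected code-word length whose leaves carry positive probabilities, and suppose leaf p and leaf q satisfy p < q and depth(p) ≥ depth(q). Let T_{p,q} be the subtree of T rooted at the ancestor of p at depth equal to depth(q). Then swapping leaf q with the subtree T_{p,q} yields a valid binary tree with the same expected code-word length. -/
import Mathlib


/-- exchange argument: in a minimal-expected-length prefix code,
if `pr a < pr b` and the code word of `a` is at least as long as that of `b`, then
swapping the code word of `b` with the "subtree" rooted at the ancestor of `c a` at
depth `(c b).length` (i.e. exchanging the prefixes `w = (c a).take (c b).length` and
`c b` throughout) yields a valid prefix code with the same expected code-word length. -/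
theorem exchange_argument
    (n : ℕ) (pr : Fin n → ℝ) (c : Fin n → List Bool) (a b : Fin n)
    (hpos : ∀ i, 0 < pr i)
    (hpf : ∀ i j, i ≠ j → ¬ (c i <+: c j))
    (hmin : ∀ c'' : Fin n → List Bool, (∀ i j, i ≠ j → ¬ (c'' i <+: c'' j)) →
      ∑ i, pr i * ((c i).length : ℝ) ≤ ∑ i, pr i * ((c'' i).length : ℝ))
    (hlt : pr a < pr b) (hd : (c b).length ≤ (c a).length) :
    (∀ i j, i ≠ j →
      ¬ ((fun i => if (c a).take (c b).length <+: c i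
            then c b ++ (c i).drop (c b).length
            else if c b <+: c i
              then (c a).take (c b).length ++ (c i).drop (c b).length
              else c i) i <+:
          (fun i => if (c a).take (c b).length <+: c i
            then c b ++ (c i).drop (c b).length
            else if c b <+: c i
              then (c a).take (c b).length ++ (c i).drop (c b).length
              else c i) j)) ∧
    ∑ i, pr i * (((if (c a).take (c b).length <+: c i
            then c b ++ (c i).drop (c b).length
            else if c b <+: c i
              then (c a).take (c b).length ++ (c i).drop (c b).length
              else c i).length : ℕ) : ℝ) =
      ∑ i, pr i * ((c i).length : ℝ) := by

  classical
  have hab : a ≠ b := by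
    intro h; rw [h] at hlt; exact lt_irrefl _ hlt
  set L := (c b).length with hLdef
  set w := (c a).take L with hwdef
  have hwlen : w.length = L := by
    rw [hwdef, List.length_take]; exact min_eq_left hd
  have hwpre : w <+: c a := List.take_prefix _ _
  have hwne : w ≠ c b := fun h => hpf b a hab.symm (h ▸ hwpre)
  have hwb : ¬ (w <+: c b) := fun h => hwne (h.eq_of_length (by rw [hwlen]))
  have hbw : ¬ (c b <+: w) := fun h => hwne (h.eq_of_length (by rw [hwlen])).symm
  have hexcl : ∀ x : List Bool, w <+: x → c b <+: x → False := fun x h1 h2 =>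
    hwb (List.prefix_of_prefix_length_le h1 h2 (by rw [hwlen]))
  have hdecomp : ∀ x : List Bool, w <+: x → x = w ++ x.drop L := by
    intro x h
    conv_lhs => rw [← List.take_append_drop L x]
    congr 1
    have := List.prefix_iff_eq_take.mp h
    rw [hwlen] at this; exact this.symm
  have hdecompb : ∀ x : List Bool, c b <+: x → x = c b ++ x.drop L := by
    intro x h
    conv_lhs => rw [← List.take_append_drop L x]
    congr 1
    exact (List.prefix_iff_eq_take.mp h).symm
  constructor
  · intro i j hij hpre
    simp only at hpre
    by_cases h1 : w <+: c i
    · rw [if_pos h1] at hpre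
      by_cases hj1 : w <+: c j
      · rw [if_pos hj1] at hpre
        have hdd : (c i).drop L <+: (c j).drop L :=
          (List.prefix_append_right_inj (c b)).mp hpre
        refine hpf i j hij ?_
        rw [hdecomp _ h1, hdecomp _ hj1]
        exact (List.prefix_append_right_inj w).mpr hdd
      · by_cases hj2 : c b <+: c j
        · rw [if_neg hj1, if_pos hj2] at hpre
          have h3 : c b <+: w ++ (c j).drop L :=
            (List.prefix_append (c b) ((c i).drop L)).trans hpre
          exact hbw (List.prefix_of_prefix_length_le h3
            (List.prefix_append w _) (by rw [hwlen]))
        · rw [if_neg hj1, if_neg hj2] at hpre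
          exact hj2 ((List.prefix_append (c b) ((c i).drop L)).trans hpre)
    · by_cases h2 : c b <+: c i
      · rw [if_neg h1, if_pos h2] at hpre
        by_cases hj1 : w <+: c j
        · rw [if_pos hj1] at hpre
          have h3 : w <+: c b ++ (c j).drop L :=
            (List.prefix_append w ((c i).drop L)).trans hpre
          exact hwb (List.prefix_of_prefix_length_le h3
            (List.prefix_append (c b) _) (by rw [hwlen]))
        · by_cases hj2 : c b <+: c j
          · rw [if_neg hj1, if_pos hj2] at hpre
            have hdd : (c i).drop L <+: (c j).drop L :=
              (List.prefix_append_right_inj w).mp hpre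
            refine hpf i j hij ?_
            rw [hdecompb _ h2, hdecompb _ hj2]
            exact (List.prefix_append_right_inj (c b)).mpr hdd
          · rw [if_neg hj1, if_neg hj2] at hpre
            exact hj1 ((List.prefix_append w ((c i).drop L)).trans hpre)
      · rw [if_neg h1, if_neg h2] at hpre
        by_cases hj1 : w <+: c j
        · rw [if_pos hj1] at hpre
          rcases le_or_gt (c i).length L with hle | hgt
          · have h3 : c i <+: c b :=
              List.prefix_of_prefix_length_le hpre (List.prefix_append (c b) _) hle
            by_cases hib : i = b
            · exact h2 (hib ▸ List.prefix_refl (c i))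
            · exact hpf i b hib h3
          · exact h2 (List.prefix_of_prefix_length_le
              (List.prefix_append (c b) ((c j).drop L)) hpre hgt.le)
        · by_cases hj2 : c b <+: c j
          · rw [if_neg hj1, if_pos hj2] at hpre
            rcases le_or_gt (c i).length L with hle | hgt
            · have h3 : c i <+: w :=
                List.prefix_of_prefix_length_le hpre (List.prefix_append w _)
                  (by rw [hwlen]; exact hle)
              by_cases hia : i = a
              · subst hia
                have h4 : c i = w := h3.eq_of_length
                  (le_antisymm (h3.length_le) (by rw [hwlen]; exact hd)) 
                exact h1 (h4 ▸ List.prefix_refl (c i))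
              · exact hpf i a hia (h3.trans hwpre)
            · exact h1 (List.prefix_of_prefix_length_le
                (List.prefix_append w ((c j).drop L)) hpre
                (by rw [hwlen]; exact hgt.le))
          · rw [if_neg hj1, if_neg hj2] at hpre
            exact hpf i j hij hpre
  · refine Finset.sum_congr rfl fun i _ => ?_
    congr 1
    norm_cast
    by_cases h1 : w <+: c i
    · have hLx : L ≤ (c i).length := hwlen ▸ h1.length_le
      rw [if_pos h1, List.length_append, List.length_drop]
      omega
    · by_cases h2 : c b <+: c i
      · have hLx : L ≤ (c i).length := h2.length_le
        rw [if_neg h1, if_pos h2, List.length_append, List.length_drop, hwlen]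
        omega
      · rw [if_neg h1, if_neg h2]
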